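/- For every natural number n ≥ 1, the maximum cardinality of a sum-free subset of F_5^n is 2·5^(n-1). -/

import Mathlib

open Finset

section

local instance : Fact (Nat.Prime 5) := ⟨by norm_num⟩

/-- Every fiber of a linear functional hitting 1 has cardinality `5 ^ (n-1)`. -/
private lemma fiber_card {n : ℕ} (hn : 1 ≤ n)
    (l : (Fin n → ZMod 5) →ₗ[ZMod 5] ZMod 5) (u : Fin n → ZMod 5) (hu : l u = 1)
    (t : ZMod 5) :
    (univ.filter (fun a => l a = t)).card = 5 ^ (n - 1) := by
  obtain ⟨m, rfl⟩ : ∃ m, n = m + 1 := ⟨n - 1, (Nat.succ_pred_eq_of_pos hn).symm⟩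
  simp only [Nat.add_sub_cancel]
  have hbij : ∀ s : ZMod 5, (univ.filter (fun a => l a = s)).card
      = (univ.filter (fun a => l a = 0)).card := by
    intro s
    apply Finset.card_bij' (fun a _ => a - s • u) (fun a _ => a + s • u)
    · intro a ha
      simp only [mem_filter, mem_univ, true_and] at ha ⊢
      simp [map_sub, map_smul, ha, hu]
    · intro a ha
      simp only [mem_filter, mem_univ, true_and] at ha ⊢
      simp [map_add, map_smul, ha, hu]
    · intro a _; abel
    · intro a _; abel
  have hsum : ∑ s : ZMod 5, (univ.filter (fun a => l a = s)).card = 5 ^ (m + 1) := by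
    rw [← Finset.card_eq_sum_card_fiberwise (fun a _ => mem_univ (l a))]
    simp [Fintype.card_fun]
  have h5 : 5 * (univ.filter (fun a => (l a : ZMod 5) = 0)).card = 5 ^ (m + 1) := by
    rw [← hsum]
    rw [Finset.sum_congr rfl (fun s _ => hbij s)]
    simp [Finset.card_univ, mul_comm]
  have := hbij t
  rw [this]
  have : 5 * (univ.filter (fun a => (l a : ZMod 5) = 0)).card = 5 * 5 ^ m := by
    rw [h5, pow_succ, mul_comm]
  omega

end

theorem stmt_1 (n : ℕ) (hn : 1 ≤ n) :
    IsGreatest {k : ℕ | ∃ A : Finset (Fin n → ZMod 5),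
      (∀ x ∈ A, ∀ y ∈ A, x + y ∉ A) ∧ A.card = k} (2 * 5 ^ (n - 1)) := by
  constructor
  · -- membership: the construction {v | v 0 ∈ {1, 4}}
    set i₀ : Fin n := ⟨0, hn⟩
    refine ⟨univ.filter (fun v => v i₀ = 1 ∨ v i₀ = 4), ?_, ?_⟩
    · intro x hx y hy hxy
      simp only [mem_filter, mem_univ, true_and] at hx hy hxy
      have key : ∀ a b : ZMod 5, (a = 1 ∨ a = 4) → (b = 1 ∨ b = 4) →
          ¬(a + b = 1 ∨ a + b = 4) := by decide
      exact key (x i₀) (y i₀) hx hy (by simpa using hxy)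
    · have hl : ∀ t : ZMod 5, (univ.filter (fun v : Fin n → ZMod 5 => v i₀ = t)).card
          = 5 ^ (n - 1) := by
        intro t
        exact fiber_card hn (LinearMap.proj i₀) (Pi.single i₀ 1) (by simp) t
      rw [Finset.filter_or, Finset.card_union_of_disjoint, hl, hl, two_mul]
      · rw [Finset.disjoint_filter]
        intro v _ h1 h4
        rw [h1] at h4
        exact absurd h4 (by decide)
  · -- upper bound
    rintro k ⟨A, hA, rfl⟩
    haveI : Fact (Nat.Prime 5) := ⟨by norm_num⟩
    rcases A.eq_empty_or_nonempty with rfl | ⟨x, hx⟩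
    · simp
    -- x ∈ A, x ≠ 0
    have hx0 : x ≠ 0 := by
      rintro rfl
      exact hA 0 hx 0 hx (by simpa using hx)
    obtain ⟨i₀, hi₀⟩ : ∃ i, x i ≠ 0 := by
      by_contra h
      push_neg at h
      exact hx0 (funext h)
    -- linear functional with l x = 1
    set l : (Fin n → ZMod 5) →ₗ[ZMod 5] ZMod 5 := (x i₀)⁻¹ • LinearMap.proj i₀ with hl
    have hlx : l x = 1 := by
      simp only [hl, LinearMap.smul_apply, LinearMap.proj_apply, smul_eq_mul]
      exact inv_mul_cancel₀ hi₀
    -- coset representative map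
    set φ : (Fin n → ZMod 5) → (Fin n → ZMod 5) := fun a => a - (l a) • x with hφ
    have hφx : ∀ a, φ (a + x) = φ a := by
      intro a
      simp only [hφ, map_add, hlx, add_smul, one_smul]
      abel
    have hφK : ∀ a, l (φ a) = 0 := by
      intro a
      simp [hφ, map_sub, map_smul, hlx]
    set K : Finset (Fin n → ZMod 5) := univ.filter (fun c => l c = 0) with hK
    have hKcard : K.card = 5 ^ (n - 1) := fiber_card hn l x hlx 0
    have hcount : A.card = ∑ c ∈ K, (A.filter (fun a => φ a = c)).card :=
      Finset.card_eq_sum_card_fiberwise (fun a _ => by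
        simp [hK, hφK a])
    rw [hcount]
    calc ∑ c ∈ K, (A.filter (fun a => φ a = c)).card
        ≤ ∑ _c ∈ K, 2 := by
          apply Finset.sum_le_sum
          intro c _
          -- per-coset bound
          set S := A.filter (fun a => φ a = c) with hS
          set S' := S.image (· + x) with hS'
          have hS'card : S'.card = S.card := Finset.card_image_of_injective _ (add_left_injective x)
          have hdisj : Disjoint S S' := by
            rw [Finset.disjoint_left]
            intro b hb hb'
            obtain ⟨a, ha, rfl⟩ := Finset.mem_image.mp hb'
            exact hA a (Finset.mem_filter.mp ha).1 x hx (Finset.mem_filter.mp hb).1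
          have hsub : S ∪ S' ⊆ (univ : Finset (ZMod 5)).image (fun t => c + t • x) := by
            intro b hb
            have hbφ : φ b = c := by
              rcases Finset.mem_union.mp hb with hb | hb
              · exact (Finset.mem_filter.mp hb).2
              · obtain ⟨a, ha, rfl⟩ := Finset.mem_image.mp hb
                rw [hφx]
                exact (Finset.mem_filter.mp ha).2
            refine Finset.mem_image.mpr ⟨l b, mem_univ _, ?_⟩
            have : b - l b • x = c := hbφ
            rw [← this]; abel
          have h5 : (S ∪ S').card ≤ 5 := by
            calc (S ∪ S').card ≤ ((univ : Finset (ZMod 5)).image (fun t => c + t • x)).card :=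
                  Finset.card_le_card hsub
              _ ≤ (univ : Finset (ZMod 5)).card := Finset.card_image_le
              _ = 5 := by simp
          have := Finset.card_union_of_disjoint hdisj
          omega
      _ = 2 * 5 ^ (n - 1) := by rw [Finset.sum_const, hKcard, smul_eq_mul, mul_comm]
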